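/- Let H be a real Hilbert space, T > 0, ρ ∈ (0,∞], and let C : [0,T] ⇉ H be a set-valued map such that: (H₁) for all t ∈ [0,T], C(t) is nonempty, closed, connected, and ρ-uniformly prox-regular; (H₂) C is lower semicontinuous on [0,T]; and there exists r > 0 with C(t) ⊆ B̄_r[0] for all t ∈ [0,T]. Then C satisfies the bounded selection-extension property (H₃): for every bounded map x : [0,T] → H with x(t) ∈ C(t) for all t and every η > 0, there exists R > 0 such that for every compact K ⊆ [0,T] and every continuous y : K → H with y(t) ∈ C(t) for all t ∈ K and sup_{t∈K}‖y(t) − x(t)‖ ≤ η, there is a continuous ȳ : [0,T] → H with ȳ(t) ∈ C(t) for all t ∈ [0,T], ȳ = y on K, and sup_{t∈[0,T]}‖ȳ(t)‖ ≤ R. -/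

import Mathlib

open MeasureTheory Set Metric Filter Topology
open scoped RealInnerProductSpace ENNReal

/-- The proximal normal cone of `S` at `x`: `ζ ∈ N^P(S;x)` iff there are `σ ≥ 0`, `η > 0`
with `⟪ζ, y - x⟫ ≤ σ‖y - x‖²` for all `y ∈ S` with `‖y - x‖ < η`. -/
def ProxNormalCone {H : Type*} [NormedAddCommGroup H] [InnerProductSpace ℝ H]
    (S : Set H) (x : H) : Set H :=
  {ζ : H | ∃ σ : ℝ, 0 ≤ σ ∧ ∃ η : ℝ, 0 < η ∧
    ∀ y ∈ S, ‖y - x‖ < η → ⟪ζ, y - x⟫ ≤ σ * ‖y - x‖ ^ 2}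

/-- `ρ`-uniform prox-regularity, with `ρ ∈ (0,∞]` encoded in `ℝ≥0∞`.
For `ρ = ∞` one has `‖ζ‖ / (2 * ρ.toReal) = ‖ζ‖ / 0 = 0`, recovering the convex inequality. -/
def UniformlyProxRegular {H : Type*} [NormedAddCommGroup H] [InnerProductSpace ℝ H]
    (ρ : ℝ≥0∞) (S : Set H) : Prop :=
  ∀ x ∈ S, ∀ ζ ∈ ProxNormalCone S x, ∀ x' ∈ S,
    ⟪ζ, x' - x⟫ ≤ ‖ζ‖ / (2 * ρ.toReal) * ‖x' - x‖ ^ 2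

/-- Lower semicontinuity of a set-valued map on a set `A`: for every `a ∈ A` and open `U`
meeting `C a`, the set of points of `A` where `C` meets `U` is a neighborhood of `a` in `A`. -/
def LscOn {α β : Type*} [TopologicalSpace α] [TopologicalSpace β]
    (C : α → Set β) (A : Set α) : Prop :=
  ∀ a ∈ A, ∀ U : Set β, IsOpen U → (C a ∩ U).Nonempty →
    {a' | a' ∈ A ∧ (C a' ∩ U).Nonempty} ∈ nhdsWithin a A

/-- Admissible trajectory for a moving set `C` on `[0,T]`: right-continuous, of bounded
variation, with `x 0 ∈ C 0` and `x t ∈ C t` for all `t ∈ [0,T]`. -/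
def AdmissibleTrajectory {E : Type*} [NormedAddCommGroup E]
    (C : ℝ → Set E) (T : ℝ) (x : ℝ → E) : Prop :=
  (∀ t ∈ Icc (0:ℝ) T, ContinuousWithinAt x (Ici t) t) ∧
    BoundedVariationOn x (Icc (0:ℝ) T) ∧ x 0 ∈ C 0 ∧ ∀ t ∈ Icc (0:ℝ) T, x t ∈ C t

/-- The differential measure `dx` is absolutely continuous w.r.t. `ν` with density
`v ∈ L¹_ν`: `x t = x 0 + ∫_{(0,t]} v dν` for all `t ∈ [0,T]`. -/
def HasDensity {E : Type*} [NormedAddCommGroup E] [NormedSpace ℝ E]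
    (T : ℝ) (ν : Measure ℝ) (x v : ℝ → E) : Prop :=
  Integrable v ν ∧ ∀ t ∈ Icc (0:ℝ) T, x t = x 0 + ∫ s in Ioc (0:ℝ) t, v s ∂ν

/-- A (complete) positive Radon measure on `[0,T]`: a finite inner regular Borel measure
carried by `[0,T]`. -/
def IsRadonOn (ν : Measure ℝ) (T : ℝ) : Prop :=
  IsFiniteMeasure ν ∧ ν.InnerRegular ∧ ν ((Icc (0:ℝ) T)ᶜ) = 0

/-- The bounded selection-extension property (H₃). -/
def SelectionExtension {E : Type*} [NormedAddCommGroup E] (C : ℝ → Set E) (T : ℝ) : Prop :=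
  ∀ x : ℝ → E, (∃ M : ℝ, ∀ t ∈ Icc (0:ℝ) T, ‖x t‖ ≤ M) →
    (∀ t ∈ Icc (0:ℝ) T, x t ∈ C t) → ∀ η : ℝ, 0 < η →
    ∃ R : ℝ, 0 < R ∧
      ∀ K : Set ℝ, IsCompact K → K ⊆ Icc (0:ℝ) T →
        ∀ y : ℝ → E, ContinuousOn y K → (∀ t ∈ K, y t ∈ C t) →
          (∀ t ∈ K, ‖y t - x t‖ ≤ η) →
          ∃ ybar : ℝ → E, ContinuousOn ybar (Icc (0:ℝ) T) ∧
            (∀ t ∈ Icc (0:ℝ) T, ybar t ∈ C t) ∧ (∀ t ∈ K, ybar t = y t) ∧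
            ∀ t ∈ Icc (0:ℝ) T, ‖ybar t‖ ≤ R

/-- Hypothesis (H₁): each `C t` is nonempty, closed, connected and `ρ`-uniformly prox-regular. -/
def HypH1 {H : Type*} [NormedAddCommGroup H] [InnerProductSpace ℝ H]
    (ρ : ℝ≥0∞) (C : ℝ → Set H) (T : ℝ) : Prop :=
  ∀ t ∈ Icc (0:ℝ) T, (C t).Nonempty ∧ IsClosed (C t) ∧ IsConnected (C t) ∧
    UniformlyProxRegular ρ (C t)

section Density

private lemma lens_real (d s δ d' na α nb : ℝ)
    (hd : 0 < d) (hs : 0 < s) (hsd : 2*s ≤ d) (hδ : 0 < δ) (hδs : 3*δ ≤ s)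
    (hd'low : d - s ≤ d') (hd'up : d' ≤ d - s + δ)
    (hna_ge : d' ≤ na) (hna_le : na ≤ d' + δ)
    (hsq : d^2 ≤ na^2 + 2*s*α + s^2)
    (hαup : α ≤ na)
    (hab : na^2 = α^2 + nb^2) (hnb0 : 0 ≤ nb) :
    d' - (2*d'*(δ/s) + δ) ≤ α ∧ α ≤ d' + δ ∧ nb ≤ 3*d*Real.sqrt (δ/s) := by
  set x := δ / s with hx
  have hx0 : 0 < x := div_pos hδ hs
  have hδx : δ = s * x := by rw [hx]; field_simp
  have hx3 : x ≤ 1/3 := by rw [hx, div_le_iff₀ hs]; linarith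
  clear_value x
  have hd'pos : 0 < d' := by linarith
  have hd'd : d' ≤ d := by linarith
  have hαlow : d' - (2*d'*x + δ) ≤ α := by
    have hnn : (0:ℝ) ≤ d' + s - δ := by linarith
    have h4 : (d' + s - δ) ^ 2 ≤ d ^ 2 := by
      have := pow_le_pow_left₀ hnn (by linarith : d' + s - δ ≤ d) 2
      exact this
    have h5 : na ^ 2 ≤ (d' + δ)^2 := by
      have := pow_le_pow_left₀ (by linarith : (0:ℝ) ≤ na) hna_le 2
      exact this
    have idd : (d'+s-δ)^2 - (d'+δ)^2 - s^2 = 2*d'*s - 4*d'*δ - 2*s*δ := by ring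
    have h6 : 2*d'*s - 4*d'*δ - 2*s*δ ≤ 2*s*α := by linarith
    have hmul : (d' - (2*d'*x + δ)) * (2*s) ≤ α * (2*s) := by
      have e : (d' - (2*d'*x + δ)) * (2*s) = 2*d'*s - 4*d'*(s*x) - 2*s*δ := by ring
      rw [← hδx] at e
      linarith
    exact le_of_mul_le_mul_right hmul (by positivity)
  have hαup' : α ≤ d' + δ := le_trans hαup hna_le
  refine ⟨hαlow, hαup', ?_⟩
  set θ := Real.sqrt x with hθ
  have hθpos : 0 < θ := Real.sqrt_pos.mpr hx0
  have hθsq : θ ^ 2 = x := Real.sq_sqrt hx0.le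
  clear_value θ
  have hEnn : 0 ≤ d' - (2*d'*x + δ) := by
    have p1 : (2*d')*x ≤ (2*d')*(1/3) := mul_le_mul_of_nonneg_left hx3 (by linarith)
    have p2 : s ≤ d' := by linarith
    linarith
  have hbsq : nb ^ 2 ≤ 9 * d^2 * x := by
    have h11 : (d' - (2*d'*x + δ))^2 ≤ α ^ 2 := pow_le_pow_left₀ hEnn hαlow 2
    have h5' : na ^ 2 ≤ (d' + δ)^2 := pow_le_pow_left₀ (by linarith) hna_le 2
    have h12 : nb^2 ≤ (d'+δ)^2 - (d' - (2*d'*x + δ))^2 := by linarith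
    have hfact : (d'+δ)^2 - (d' - (2*d'*x + δ))^2 = 4*d'*x*(1-x)*(s+d') := by
      rw [hδx]; ring
    have hA : (0:ℝ) ≤ d'*(s+d') := by positivity
    have id1 : 4*x*(d'*(s+d')) - 4*d'*x*(1-x)*(s+d') = 4*(x*x)*(d'*(s+d')) := by ring
    have pos1 : 0 ≤ 4*(x*x)*(d'*(s+d')) :=
      mul_nonneg (mul_nonneg (by norm_num) (mul_self_nonneg x)) hA
    have t1 : 4*d'*x*(1-x)*(s+d') ≤ 4*x*(d'*(s+d')) := by linarith
    have e1 : d'*(s+d') ≤ d*((3/2)*d) :=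
      mul_le_mul hd'd (by linarith) (by linarith) hd.le
    have t2 : 4*x*(d'*(s+d')) ≤ 4*x*(d*((3/2)*d)) :=
      mul_le_mul_of_nonneg_left e1 (by positivity)
    have id2 : 9*d^2*x - 4*x*(d*((3/2)*d)) = 3*((d*d)*x) := by ring
    have pos2 : 0 ≤ 3*((d*d)*x) :=
      mul_nonneg (by norm_num) (mul_nonneg (mul_self_nonneg d) hx0.le)
    linarith
  have h3dθ : (3*d*θ)^2 = 9*d^2*x := by rw [mul_pow, mul_pow, hθsq]; ring
  have hs1 : Real.sqrt (nb^2) ≤ Real.sqrt ((3*d*θ)^2) := Real.sqrt_le_sqrt (by linarith)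
  rw [Real.sqrt_sq hnb0, Real.sqrt_sq (by positivity)] at hs1
  exact hs1

private lemma lens_E (d s δ d' : ℝ)
    (hd : 0 < d) (hs : 0 < s) (hsd : 2*s ≤ d) (hδ : 0 < δ) (hδs : 3*δ ≤ s)
    (hd'low : d - s ≤ d') (hd'up : d' ≤ d - s + δ) :
    (d' + δ) - (d' - (2*d'*(δ/s) + δ)) ≤ 3 * d * Real.sqrt (δ/s) := by
  set x := δ / s with hx
  have hx0 : 0 < x := div_pos hδ hs
  have hδx : δ = s * x := by rw [hx]; field_simp
  have hx3 : x ≤ 1/3 := by rw [hx, div_le_iff₀ hs]; linarith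
  clear_value x
  have hd'd : d' ≤ d := by linarith
  have hd'pos : 0 < d' := by linarith
  set θ := Real.sqrt x with hθ
  have hθpos : 0 < θ := Real.sqrt_pos.mpr hx0
  have hθsq : θ ^ 2 = x := Real.sq_sqrt hx0.le
  have hθ1 : θ ≤ 1 := by
    rw [hθ, show (1:ℝ) = Real.sqrt 1 by simp]
    exact Real.sqrt_le_sqrt (by linarith)
  clear_value θ
  have h1 : (d' + δ) - (d' - (2*d'*x + δ)) = 2*δ + 2*d'*x := by ring
  have h2 : 2*δ + 2*d'*x ≤ 3*d*θ^2 := by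
    rw [hθsq]
    have idd : 2*δ + 2*d'*x = (2*s + 2*d')*x := by rw [hδx]; ring
    have hb : (2*s + 2*d')*x ≤ (3*d)*x := mul_le_mul_of_nonneg_right (by linarith) hx0.le
    linarith
  have h3 : 3*d*θ^2 ≤ 3*d*θ := by
    calc 3*d*θ^2 = (3*d*θ)*θ := by ring
    _ ≤ (3*d*θ)*1 := by
        have h30 : (0:ℝ) ≤ 3*d*θ := by positivity
        exact mul_le_mul_of_nonneg_left hθ1 h30
    _ = 3*d*θ := mul_one _
  linarith

variable {H : Type*} [NormedAddCommGroup H] [InnerProductSpace ℝ H] [CompleteSpace H]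

set_option maxHeartbeats 1000000 in
/-- Moving the center towards an almost-nearest point: quantitative lens lemma. -/
lemma moveCenter (S : Set H) (u q : H) (s δ : ℝ)
    (hq : q ∈ S) (hdq : dist u q ≤ infDist u S + δ)
    (hd : 0 < infDist u S) (hs : 0 < s) (hsd : 2 * s ≤ infDist u S)
    (hδ : 0 < δ) (hδs : 3 * δ ≤ s) :
    ∃ u' : H, dist u' u = s ∧
      infDist u S - s ≤ infDist u' S ∧ infDist u' S ≤ infDist u S - s + δ ∧
      dist u' q ≤ infDist u' S + δ ∧
      ∀ z₁ ∈ S, ∀ z₂ ∈ S, dist u' z₁ ≤ infDist u' S + δ → dist u' z₂ ≤ infDist u' S + δ →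
        dist z₁ z₂ ≤ 13 * infDist u S * Real.sqrt (δ / s) := by
  set d := infDist u S with hdef
  clear_value d
  set n := dist u q with hn
  have hdn : d ≤ n := by rw [hn, hdef]; exact infDist_le_dist_of_mem hq
  have hnpos : 0 < n := lt_of_lt_of_le hd hdn
  set w : H := (n⁻¹ : ℝ) • (q - u) with hw
  have hqu : ‖q - u‖ = n := by rw [hn, dist_comm, dist_eq_norm]
  have hwnorm : ‖w‖ = 1 := by
    rw [hw, norm_smul, hqu, Real.norm_eq_abs, abs_of_pos (by positivity)]
    field_simp
  set u' := u + s • w with hu'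
  have hsn : s ≤ n := le_trans (by linarith) hdn
  have hcoef : s * n⁻¹ ≤ 1 := by
    rw [← div_eq_mul_inv]
    exact div_le_one_of_le₀ hsn hnpos.le
  have hdist_u'u : dist u' u = s := by
    rw [hu', dist_eq_norm, add_sub_cancel_left, norm_smul, hwnorm, Real.norm_eq_abs,
      abs_of_pos hs, mul_one]
  have hu'q : u' - q = (1 - s * n⁻¹) • (u - q) := by
    rw [hu', hw, smul_smul]
    have hqu' : q - u = -(u - q) := by abel
    rw [hqu', smul_neg]
    module
  have hdist_u'q : dist u' q = n - s := by
    rw [dist_eq_norm, hu'q, norm_smul, Real.norm_eq_abs,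
      abs_of_nonneg (by linarith : (0:ℝ) ≤ 1 - s * n⁻¹)]
    have h5 : ‖u - q‖ = n := by rw [hn, dist_eq_norm]
    rw [h5]
    have : 0 < n := hnpos
    field_simp
  have hzw : ∀ z : H, z - u = (z - u') + s • w := by
    intro z; rw [hu']; abel
  have hww : ⟪w, w⟫ = (1:ℝ) := by
    rw [real_inner_self_eq_norm_sq, hwnorm]; norm_num
  clear_value w
  clear hw
  clear_value u'
  clear hu'
  have hlow : d - s ≤ infDist u' S := by
    have h := infDist_le_infDist_add_dist (x := u) (y := u') (s := S)
    rw [dist_comm] at hdist_u'u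
    rw [hdist_u'u, ← hdef] at h
    linarith
  have hup : infDist u' S ≤ d - s + δ := by
    calc infDist u' S ≤ dist u' q := infDist_le_dist_of_mem hq
    _ = n - s := hdist_u'q
    _ ≤ d - s + δ := by linarith
  refine ⟨u', hdist_u'u, hlow, hup, ?_, ?_⟩
  · rw [hdist_u'q]; linarith
  · -- the lens diameter estimate
    set d' := infDist u' S with hd'
    clear_value d'
    have hd'pos : 0 < d' := by linarith
    have key : ∀ z ∈ S, dist u' z ≤ d' + δ →
        (d' - (2 * d' * (δ / s) + δ) ≤ ⟪z - u', w⟫ ∧ ⟪z - u', w⟫ ≤ d' + δ ∧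
          ‖(z - u') - ⟪z - u', w⟫ • w‖ ≤ 3 * d * Real.sqrt (δ / s)) := by
      intro z hz hzd
      have hanorm : ‖z - u'‖ = dist u' z := by rw [dist_eq_norm, norm_sub_rev]
      have ha_ge : d' ≤ ‖z - u'‖ := by rw [hanorm, hd']; exact infDist_le_dist_of_mem hz
      have ha_le : ‖z - u'‖ ≤ d' + δ := by rw [hanorm]; exact hzd
      have hzu : d ≤ ‖(z - u') + s • w‖ := by
        rw [← hzw z, ← dist_eq_norm, dist_comm, hdef]
        exact infDist_le_dist_of_mem hz
      have hsq : d ^ 2 ≤ ‖z - u'‖ ^ 2 + 2 * s * ⟪z - u', w⟫ + s ^ 2 := by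
        have e : ‖(z - u') + s • w‖^2 = ‖z - u'‖^2 + 2*s*⟪z - u', w⟫ + s^2 := by
          rw [norm_add_sq_real, real_inner_smul_right]
          have h3 : ‖s • w‖ ^ 2 = s ^ 2 := by
            rw [norm_smul, hwnorm, Real.norm_eq_abs, abs_of_pos hs, mul_one]
          rw [h3]; ring
        calc d ^ 2 ≤ ‖(z - u') + s • w‖^2 := by
              have := pow_le_pow_left₀ hd.le hzu 2
              exact this
        _ = _ := e
      have hαup : ⟪z - u', w⟫ ≤ ‖z - u'‖ := by
        calc ⟪z - u', w⟫ ≤ ‖z - u'‖ * ‖w‖ := real_inner_le_norm _ w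
        _ = ‖z - u'‖ := by rw [hwnorm, mul_one]
      have hab : ‖z - u'‖ ^ 2 = ⟪z - u', w⟫ ^ 2 + ‖(z - u') - ⟪z - u', w⟫ • w‖ ^ 2 := by
        have hbw : ⟪w, (z - u') - ⟪z - u', w⟫ • w⟫ = 0 := by
          rw [inner_sub_right, real_inner_smul_right, hww, mul_one,
            real_inner_comm w (z - u')]
          exact sub_self _
        have he : z - u' = ⟪z - u', w⟫ • w + ((z - u') - ⟪z - u', w⟫ • w) := by abel
        calc ‖z - u'‖ ^ 2 = ‖⟪z - u', w⟫ • w + ((z - u') - ⟪z - u', w⟫ • w)‖ ^ 2 := by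
              rw [← he]
        _ = _ := by
            rw [norm_add_sq_real, real_inner_smul_left, hbw, norm_smul,
              Real.norm_eq_abs, hwnorm, mul_one, sq_abs]
            ring
      exact lens_real d s δ d' ‖z - u'‖ ⟪z - u', w⟫ ‖(z - u') - ⟪z - u', w⟫ • w‖
        hd hs hsd hδ hδs hlow hup ha_ge ha_le hsq hαup hab (norm_nonneg _)
    intro z₁ hz₁ z₂ hz₂ h1 h2
    obtain ⟨l1, u1, b1⟩ := key z₁ hz₁ h1
    obtain ⟨l2, u2, b2⟩ := key z₂ hz₂ h2
    have hdiff : z₁ - z₂ = (⟪z₁ - u', w⟫ - ⟪z₂ - u', w⟫) • w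
        + (((z₁ - u') - ⟪z₁ - u', w⟫ • w) - ((z₂ - u') - ⟪z₂ - u', w⟫ • w)) := by
      rw [sub_smul]; abel
    have hnorm : dist z₁ z₂ ≤ |⟪z₁ - u', w⟫ - ⟪z₂ - u', w⟫|
        + (‖(z₁ - u') - ⟪z₁ - u', w⟫ • w‖ + ‖(z₂ - u') - ⟪z₂ - u', w⟫ • w‖) := by
      rw [dist_eq_norm, hdiff]
      calc ‖_ + _‖ ≤ ‖(⟪z₁ - u', w⟫ - ⟪z₂ - u', w⟫) • w‖
            + ‖((z₁ - u') - ⟪z₁ - u', w⟫ • w) - ((z₂ - u') - ⟪z₂ - u', w⟫ • w)‖ :=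
          norm_add_le _ _
      _ ≤ _ := by
          rw [norm_smul, Real.norm_eq_abs, hwnorm, mul_one]
          gcongr
          exact norm_sub_le _ _
    have hE := lens_E d s δ d' hd hs hsd hδ hδs hlow hup
    have habs : |⟪z₁ - u', w⟫ - ⟪z₂ - u', w⟫| ≤ 3 * d * Real.sqrt (δ / s) := by
      rw [abs_le]
      constructor <;> linarith
    have hθ0 : 0 ≤ d * Real.sqrt (δ / s) :=
      mul_nonneg hd.le (Real.sqrt_nonneg _)
    calc dist z₁ z₂ ≤ _ := hnorm
    _ ≤ 3 * d * Real.sqrt (δ / s) + (3 * d * Real.sqrt (δ / s) + 3 * d * Real.sqrt (δ / s)) := by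
        gcongr
    _ ≤ 13 * d * Real.sqrt (δ / s) := by linarith



set_option maxHeartbeats 1000000 in
/-- Points admitting a nearest point in a closed set are dense in a Hilbert space. -/
lemma exists_nearest_near (S : Set H) (hS : IsClosed S) (hne : S.Nonempty)
    (u : H) (ε : ℝ) (hε : 0 < ε) :
    ∃ v xh : H, dist v u ≤ ε ∧ xh ∈ S ∧ ∀ y ∈ S, dist v xh ≤ dist v y := by
  by_cases hcase : infDist u S < ε
  · obtain ⟨x, hxS, hxd⟩ := (infDist_lt_iff hne).mp hcase
    refine ⟨x, x, by rw [dist_comm]; exact hxd.le, hxS, fun y hy => by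
      simp [dist_nonneg]⟩
  · push_neg at hcase
    set d := infDist u S with hdd
    clear_value d
    have hd : 0 < d := lt_of_lt_of_le hε hcase
    set ε' := ε / 2 with hε'
    have hε'pos : 0 < ε' := by positivity
    have hε'd : ε' ≤ d / 2 := by rw [hε']; linarith
    set s : ℕ → ℝ := fun k => ε' * (1/2:ℝ)^(k+1) with hs
    set δf : ℕ → ℝ := fun k => s k * ((1/4:ℝ)^(k+1))^2 with hδf
    have hspos : ∀ k, 0 < s k := fun k => by simp only [hs]; positivity
    have hδfpos : ∀ k, 0 < δf k := fun k => by simp only [hδf]; positivity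
    have h4 : ∀ k : ℕ, ((1/4:ℝ)^(k+1))^2 = (1/16:ℝ)^(k+1) := by
      intro k
      rw [← pow_mul, mul_comm (k+1) 2, pow_mul]
      norm_num
    have h16le : ∀ k : ℕ, ((1/16:ℝ))^(k+1) ≤ 1/16 := by
      intro k
      calc ((1/16:ℝ))^(k+1) ≤ (1/16:ℝ)^1 :=
            pow_le_pow_of_le_one (by norm_num) (by norm_num) (by omega)
      _ = 1/16 := pow_one _
    have hδs : ∀ k, 3 * δf k ≤ s k := by
      intro k
      simp only [hδf]
      have h1 : ((1/4:ℝ)^(k+1))^2 ≤ 1/16 := by rw [h4]; exact h16le k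
      have h2 : s k * (3 * ((1/4:ℝ)^(k+1))^2) ≤ s k * (3 * (1/16)) := by
        apply mul_le_mul_of_nonneg_left _ (hspos k).le
        linarith
      calc 3 * (s k * ((1/4:ℝ)^(k+1))^2) = s k * (3 * ((1/4:ℝ)^(k+1))^2) := by ring
      _ ≤ s k * (3 * (1/16)) := h2
      _ ≤ s k := by nlinarith [(hspos k).le]
    have hδflt : ∀ k, δf k ≤ s k := by
      intro k
      have := hδs k
      have := (hδfpos k).le
      linarith
    have hδfmono : ∀ k, δf (k+1) ≤ δf k := by
      intro k
      simp only [hδf]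
      apply mul_le_mul
      · simp only [hs]
        apply mul_le_mul_of_nonneg_left _ hε'pos.le
        exact pow_le_pow_of_le_one (by norm_num) (by norm_num) (by omega)
      · rw [h4, h4]
        exact pow_le_pow_of_le_one (by norm_num) (by norm_num) (by omega)
      · positivity
      · exact (hspos k).le
    have hpowle1 : ∀ k : ℕ, ((1/2:ℝ))^k ≤ 1 := fun k =>
      pow_le_one₀ (by norm_num) (by norm_num)
    have hpowpos : ∀ k : ℕ, (0:ℝ) < (1/2:ℝ)^k := fun k => by positivity
    -- invariant
    set Inv : ℕ → H × H → Prop := fun k p =>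
      p.2 ∈ S ∧ dist p.1 p.2 ≤ infDist p.1 S + δf k ∧
        d - ε' * (1 - (1/2:ℝ)^k) ≤ infDist p.1 S ∧ infDist p.1 S ≤ d ∧
        dist p.1 u ≤ ε' * (1 - (1/2:ℝ)^k) with hInv
    have step : ∀ k (p : H × H), Inv k p → ∃ p' : H × H, Inv (k+1) p' ∧
        dist p'.1 p.1 = s k ∧ dist p'.2 p.2 ≤ (13*d/4) * (1/4:ℝ)^k := by
      intro k p hp
      obtain ⟨hq, hdq, hlowk, hupk, hdu⟩ := hp
      have hdkpos : 0 < infDist p.1 S := by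
        have h1 : ε' * (1 - (1/2:ℝ)^k) ≤ ε' := by nlinarith [(hpowpos k), hε'pos]
        linarith
      have hsdk : 2 * s k ≤ infDist p.1 S := by
        have h1 : 2 * s k = ε' * (1/2:ℝ)^k := by rw [hs]; ring
        have h2 : ε' * (1/2:ℝ)^k ≤ ε' := by nlinarith [hpowle1 k, hε'pos]
        have h3 : ε' * (1 - (1/2:ℝ)^k) ≤ ε' := by nlinarith [(hpowpos k), hε'pos]
        linarith
      obtain ⟨u', hu'u, hu'low, hu'up, hu'q, hlens⟩ :=
        moveCenter S p.1 p.2 (s k) (δf k) hq hdq hdkpos (hspos k) hsdk (hδfpos k) (hδs k)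
      obtain ⟨q', hq'S, hq'd⟩ := (infDist_lt_iff hne).mp
        (show infDist u' S < infDist u' S + δf (k+1) by linarith [hδfpos (k+1)])
      refine ⟨(u', q'), ⟨hq'S, hq'd.le, ?_, ?_, ?_⟩, hu'u, ?_⟩
      · have hp2 : ((1/2:ℝ))^(k+1) = (1/2:ℝ)^k * (1/2) := pow_succ _ _
        have : s k = ε' * ((1/2:ℝ)^k * (1/2)) := by simp only [hs]; rw [hp2]
        rw [hp2]
        linarith
      · have := hδflt k
        linarith
      · have h1 : dist u' u ≤ dist u' p.1 + dist p.1 u := dist_triangle _ _ _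
        have hp2 : ((1/2:ℝ))^(k+1) = (1/2:ℝ)^k * (1/2) := pow_succ _ _
        have h2 : s k = ε' * ((1/2:ℝ)^k * (1/2)) := by simp only [hs]; rw [hp2]
        rw [hp2]
        rw [hu'u] at h1
        linarith
      · -- distance between consecutive almost-nearest points
        have hz2 : dist u' q' ≤ infDist u' S + δf k := le_trans hq'd.le (by linarith [hδfmono k])
        have hlens' := hlens p.2 hq q' hq'S hu'q hz2
        have hsqrt : Real.sqrt (δf k / s k) = (1/4:ℝ)^(k+1) := by
          have he : δf k / s k = ((1/4:ℝ)^(k+1))^2 := by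
            simp only [hδf]
            exact mul_div_cancel_left₀ _ (hspos k).ne'
          rw [he, Real.sqrt_sq (by positivity)]
        rw [hsqrt] at hlens'
        have hd'd : infDist p.1 S ≤ d := hupk
        have hpow4 : ((1/4:ℝ))^(k+1) = (1/4:ℝ)^k * (1/4) := pow_succ _ _
        have hb : 13 * infDist p.1 S * (1/4:ℝ)^(k+1) ≤ (13*d/4) * (1/4:ℝ)^k := by
          rw [hpow4]
          have h0 : (0:ℝ) < (1/4:ℝ)^k := by positivity
          nlinarith [hdkpos.le]
        rw [dist_comm]
        exact le_trans hlens' hb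
    -- initial point
    obtain ⟨q0, hq0S, hq0d⟩ := (infDist_lt_iff hne).mp
      (show infDist u S < infDist u S + δf 0 by linarith [hδfpos 0])
    have inv0 : Inv 0 (u, q0) := by
      refine ⟨hq0S, by rw [← hdd] at hq0d ⊢; exact hq0d.le, ?_, le_of_eq hdd.symm, ?_⟩
      · simp [← hdd]
      · simp
    -- construct the sequence
    have hstep' : ∀ k (p : {p : H × H // Inv k p}), ∃ p' : H × H, Inv (k+1) p' ∧
        dist p'.1 p.1.1 = s k ∧ dist p'.2 p.1.2 ≤ (13*d/4) * (1/4:ℝ)^k :=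
      fun k p => step k p.1 p.2
    let F : ∀ k : ℕ, {p : H × H // Inv k p} := fun k =>
      Nat.rec ⟨(u, q0), inv0⟩
        (fun k pk => ⟨(hstep' k pk).choose, (hstep' k pk).choose_spec.1⟩) k
    have hFsucc : ∀ k, (F (k+1)).1 = (hstep' k (F k)).choose := fun k => rfl
    have hud : ∀ k, dist ((F (k+1)).1.1) ((F k).1.1) = s k := by
      intro k
      rw [hFsucc k]
      exact (hstep' k (F k)).choose_spec.2.1
    have hqd : ∀ k, dist ((F (k+1)).1.2) ((F k).1.2) ≤ (13*d/4) * (1/4:ℝ)^k := by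
      intro k
      rw [hFsucc k]
      exact (hstep' k (F k)).choose_spec.2.2
    have cu : CauchySeq (fun k => (F k).1.1) := by
      apply cauchySeq_of_le_geometric (1/2:ℝ) (ε'/2) (by norm_num)
      intro k
      rw [dist_comm, hud k]
      have he : s k = ε'/2 * (1/2:ℝ)^k := by simp only [hs]; rw [pow_succ]; ring
      rw [he]
    have cq : CauchySeq (fun k => (F k).1.2) := by
      apply cauchySeq_of_le_geometric (1/4:ℝ) (13*d/4) (by norm_num)
      intro k
      rw [dist_comm]
      exact hqd k
    obtain ⟨v, hv⟩ := cauchySeq_tendsto_of_complete cu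
    obtain ⟨xh, hxh⟩ := cauchySeq_tendsto_of_complete cq
    have hxhS : xh ∈ S := hS.mem_of_tendsto hxh
      (Filter.Eventually.of_forall fun k => (F k).2.1)
    have hδftend : Filter.Tendsto (fun k => δf k) atTop (nhds 0) := by
      have h1 : Filter.Tendsto (fun k : ℕ => (ε'/2) * (1/2:ℝ)^k) atTop (nhds 0) := by
        have := (tendsto_pow_atTop_nhds_zero_of_lt_one (by norm_num : (0:ℝ) ≤ 1/2)
          (by norm_num : (1/2:ℝ) < 1)).const_mul (ε'/2)
        simpa using this
      apply squeeze_zero (fun k => (hδfpos k).le) (fun k => ?_) h1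
      calc δf k ≤ s k := hδflt k
      _ = (ε'/2) * (1/2:ℝ)^k := by simp only [hs]; rw [pow_succ]; ring
    refine ⟨v, xh, ?_, hxhS, ?_⟩
    · have htd : Filter.Tendsto (fun k => dist ((F k).1.1) u) atTop (nhds (dist v u)) :=
        hv.dist tendsto_const_nhds
      apply le_of_tendsto htd
      apply Filter.Eventually.of_forall
      intro k
      have := (F k).2.2.2.2.2
      have h1 : ε' * (1 - (1/2:ℝ)^k) ≤ ε' := by nlinarith [(hpowpos k), hε'pos]
      have h2 : ε' ≤ ε := by rw [hε']; linarith
      linarith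
    · intro y hy
      have htd1 : Filter.Tendsto (fun k => dist ((F k).1.1) ((F k).1.2)) atTop
          (nhds (dist v xh)) := hv.dist hxh
      have htd2 : Filter.Tendsto (fun k => dist ((F k).1.1) y + δf k) atTop
          (nhds (dist v y)) := by
        have := (hv.dist (tendsto_const_nhds (x := y))).add hδftend
        simpa using this
      apply le_of_tendsto_of_tendsto' htd1 htd2
      intro k
      have h1 := (F k).2.2.1
      have h2 : infDist ((F k).1.1) S ≤ dist ((F k).1.1) y := infDist_le_dist_of_mem hy
      linarith

end Density


section Hull
variable {H : Type*} [NormedAddCommGroup H] [InnerProductSpace ℝ H] [CompleteSpace H]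

set_option maxHeartbeats 1000000 in
/-- Convex combinations of pairwise-close points of a uniformly prox-regular set
are close to the set. -/
lemma prox_hull {ι : Type*} (ρ : ℝ≥0∞) (S : Set H) (hS : IsClosed S) (hne : S.Nonempty)
    (prox : UniformlyProxRegular ρ S)
    (J : Finset ι) (hJ : J.Nonempty) (lam : ι → ℝ) (hlam0 : ∀ i ∈ J, 0 ≤ lam i)
    (hlam1 : ∑ i ∈ J, lam i = 1) (dd : ι → H) (hdd : ∀ i ∈ J, dd i ∈ S)
    (Δ : ℝ) (hΔ0 : 0 ≤ Δ) (hΔ : ∀ i ∈ J, ∀ j ∈ J, dist (dd i) (dd j) ≤ Δ)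
    (ε' : ℝ) (hε' : 0 < ε') :
    ∃ w ∈ S, dist (∑ i ∈ J, lam i • dd i) w ≤ (2 * ρ.toReal)⁻¹ * (4 * Δ^2) + ε' := by
  classical
  set κ := (2 * ρ.toReal)⁻¹ with hκ
  have hκ0 : 0 ≤ κ := by rw [hκ]; positivity
  set q := ∑ i ∈ J, lam i • dd i with hq
  have hsum1 : ∀ z : H, q - z = ∑ i ∈ J, lam i • (dd i - z) := by
    intro z
    have h1 : ∑ i ∈ J, lam i • (dd i - z)
        = (∑ i ∈ J, lam i • dd i) - ∑ i ∈ J, lam i • z := by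
      rw [← Finset.sum_sub_distrib]
      congr 1
      ext i
      rw [smul_sub]
    rw [h1, ← Finset.sum_smul, hlam1, one_smul, hq]
  have hqd : ∀ j ∈ J, dist q (dd j) ≤ Δ := by
    intro j hj
    rw [dist_eq_norm, hsum1 (dd j)]
    calc ‖∑ i ∈ J, lam i • (dd i - dd j)‖ ≤ ∑ i ∈ J, ‖lam i • (dd i - dd j)‖ :=
        norm_sum_le _ _
    _ ≤ ∑ i ∈ J, lam i * Δ := by
        apply Finset.sum_le_sum
        intro i hi
        rw [norm_smul, Real.norm_eq_abs, abs_of_nonneg (hlam0 i hi)]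
        have := hΔ i hi j hj
        rw [dist_eq_norm] at this
        exact mul_le_mul_of_nonneg_left this (hlam0 i hi)
    _ = Δ := by rw [← Finset.sum_mul, hlam1, one_mul]
  set den := 2 + 4*κ*(2*Δ+1) with hden
  have hdenpos : 0 < den := by rw [hden]; positivity
  set t := min 1 (ε' / den) with ht
  have ht0 : 0 < t := lt_min one_pos (by positivity)
  have ht1 : t ≤ 1 := min_le_left _ _
  have htden : t * den ≤ ε' := by
    have h1 : t ≤ ε' / den := min_le_right _ _
    calc t * den ≤ (ε'/den) * den := mul_le_mul_of_nonneg_right h1 hdenpos.le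
    _ = ε' := by field_simp
  obtain ⟨v, xh, hvq, hxhS, hnear⟩ := exists_nearest_near S hS hne q t ht0
  set ζ := v - xh with hζ
  have hζnorm : ‖ζ‖ = dist v xh := by rw [hζ, dist_eq_norm]
  have hcone : ζ ∈ ProxNormalCone S xh := by
    refine ⟨1/2, by norm_num, 1, one_pos, ?_⟩
    intro y hy _
    have h1 : dist v xh ≤ dist v y := hnear y hy
    have h2 : ‖ζ - (y - xh)‖ = dist v y := by
      rw [hζ, dist_eq_norm]
      congr 1
      abel
    have h3 : ‖ζ - (y - xh)‖^2 = ‖ζ‖^2 - 2*⟪ζ, y - xh⟫ + ‖y - xh‖^2 :=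
      norm_sub_sq_real _ _
    have h4 : ‖ζ‖^2 ≤ ‖ζ - (y - xh)‖^2 := by
      rw [h2, hζnorm]
      exact pow_le_pow_left₀ dist_nonneg h1 2
    linarith
  have hprox : ∀ y ∈ S, ⟪ζ, y - xh⟫ ≤ ‖ζ‖ * κ * ‖y - xh‖^2 := by
    intro y hy
    have := prox xh hxhS ζ hcone y hy
    calc ⟪ζ, y - xh⟫ ≤ ‖ζ‖ / (2 * ρ.toReal) * ‖y - xh‖^2 := this
    _ = ‖ζ‖ * κ * ‖y - xh‖^2 := by rw [div_eq_mul_inv, hκ]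
  obtain ⟨j₀, hj₀⟩ := hJ
  have hD₀ : ‖ζ‖ ≤ Δ + t := by
    rw [hζnorm]
    calc dist v xh ≤ dist v (dd j₀) := hnear _ (hdd j₀ hj₀)
    _ ≤ dist v q + dist q (dd j₀) := dist_triangle _ _ _
    _ ≤ t + Δ := add_le_add hvq (hqd j₀ hj₀)
    _ = Δ + t := by ring
  have hM : ∀ i ∈ J, ‖dd i - xh‖ ≤ 2*Δ + 2*t := by
    intro i hi
    calc ‖dd i - xh‖ = dist (dd i) xh := by rw [dist_eq_norm]
    _ ≤ dist (dd i) q + dist q v + dist v xh := dist_triangle4 _ _ _ _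
    _ ≤ Δ + t + (Δ + t) := by
        have e1 : dist (dd i) q ≤ Δ := by rw [dist_comm]; exact hqd i hi
        have e2 : dist q v ≤ t := by rw [dist_comm]; exact hvq
        have e3 : dist v xh ≤ Δ + t := by rw [← hζnorm]; exact hD₀
        linarith
    _ = 2*Δ + 2*t := by ring
  have hupper : ⟪ζ, q - xh⟫ ≤ ‖ζ‖ * κ * (2*Δ+2*t)^2 := by
    rw [hsum1 xh, inner_sum]
    have h1 : ∀ i ∈ J, ⟪ζ, lam i • (dd i - xh)⟫ ≤ lam i * (‖ζ‖ * κ * (2*Δ+2*t)^2) := by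
      intro i hi
      rw [real_inner_smul_right]
      apply mul_le_mul_of_nonneg_left _ (hlam0 i hi)
      calc ⟪ζ, dd i - xh⟫ ≤ ‖ζ‖ * κ * ‖dd i - xh‖^2 := hprox (dd i) (hdd i hi)
      _ ≤ ‖ζ‖ * κ * (2*Δ+2*t)^2 := by
          apply mul_le_mul_of_nonneg_left _ (by positivity)
          exact pow_le_pow_left₀ (norm_nonneg _) (hM i hi) 2
    calc ∑ i ∈ J, ⟪ζ, lam i • (dd i - xh)⟫ ≤ ∑ i ∈ J, lam i * (‖ζ‖ * κ * (2*Δ+2*t)^2) :=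
        Finset.sum_le_sum h1
    _ = ‖ζ‖ * κ * (2*Δ+2*t)^2 := by rw [← Finset.sum_mul, hlam1, one_mul]
  have hlower : ‖ζ‖^2 - ‖ζ‖ * t ≤ ⟪ζ, q - xh⟫ := by
    have h1 : q - xh = ζ + (q - v) := by rw [hζ]; abel
    rw [h1, inner_add_right]
    have h2 : ⟪ζ, ζ⟫ = ‖ζ‖^2 := real_inner_self_eq_norm_sq ζ
    have h3 : -(‖ζ‖ * t) ≤ ⟪ζ, q - v⟫ := by
      have h4 : ⟪ζ, v - q⟫ ≤ ‖ζ‖ * ‖v - q‖ := real_inner_le_norm _ _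
      have h5 : ‖v - q‖ = dist v q := by rw [dist_eq_norm]
      have h6 : ⟪ζ, q - v⟫ = -⟪ζ, v - q⟫ := by
        rw [show q - v = -(v - q) by abel, inner_neg_right]
      rw [h6]
      have h7 : ‖ζ‖ * ‖v - q‖ ≤ ‖ζ‖ * t := by
        rw [h5]
        exact mul_le_mul_of_nonneg_left hvq (norm_nonneg _)
      linarith
    linarith
  have hkey : ‖ζ‖ ≤ t + κ * (2*Δ+2*t)^2 := by
    rcases eq_or_lt_of_le (norm_nonneg ζ) with h | h
    · rw [← h]; positivity
    · have h1 : ‖ζ‖ * ‖ζ‖ - ‖ζ‖ * t ≤ ‖ζ‖ * (κ * (2*Δ+2*t)^2) := by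
        have := le_trans hlower hupper
        nlinarith [this]
      have h2 : ‖ζ‖ * (‖ζ‖ - t - κ * (2*Δ+2*t)^2) ≤ 0 := by nlinarith
      nlinarith
  refine ⟨xh, hxhS, ?_⟩
  have hfinal : dist q xh ≤ t + ‖ζ‖ := by
    calc dist q xh ≤ dist q v + dist v xh := dist_triangle _ _ _
    _ ≤ t + ‖ζ‖ := by
        rw [← hζnorm]
        have : dist q v ≤ t := by rw [dist_comm]; exact hvq
        linarith
  have hts : t*t ≤ t := by nlinarith
  have htden' : 2*t + 8*κ*Δ*t + 4*κ*t ≤ ε' := by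
    have e : 2*t + 8*κ*Δ*t + 4*κ*t = t * den := by rw [hden]; ring
    linarith
  have h4κt : 4*κ*(t*t) ≤ 4*κ*t := mul_le_mul_of_nonneg_left hts (by positivity)
  have hΔκt : 0 ≤ 8*κ*Δ*t := by positivity
  calc dist q xh ≤ t + ‖ζ‖ := hfinal
  _ ≤ t + (t + κ * (2*Δ+2*t)^2) := by linarith
  _ = κ * (4*Δ^2) + (2*t + 8*κ*Δ*t + 4*κ*(t*t)) := by ring
  _ ≤ κ * (4*Δ^2) + ε' := by linarith

end Hull


section Glue
variable {H : Type*} [NormedAddCommGroup H] [NormedSpace ℝ H]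

/-- Affine glue of a function with a target point over `[b, b']`. -/
noncomputable def glueFun (f : ℝ → H) (b b' : ℝ) (z : H) : ℝ → H :=
  fun t => f (min t b) + ((min (max t b) b' - b) / (b' - b)) • (z - f b)

lemma glueFun_continuous {f : ℝ → H} (b b' : ℝ) (z : H) (hf : Continuous f) :
    Continuous (glueFun f b b' z) := by
  apply Continuous.add
  · exact hf.comp (continuous_id.min continuous_const)
  · exact ((((continuous_id.max continuous_const).min continuous_const).sub
      continuous_const).div_const _).smul continuous_const

lemma glueFun_of_le {f : ℝ → H} {b b' : ℝ} {z : H} (hbb : b ≤ b') {t : ℝ} (ht : t ≤ b) :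
    glueFun f b b' z t = f t := by
  unfold glueFun
  rw [min_eq_left ht, max_eq_right ht, min_eq_left hbb, sub_self, zero_div, zero_smul, add_zero]

lemma glueFun_theta {f : ℝ → H} {b b' : ℝ} {z : H} (hbb : b < b') {t : ℝ} (ht : b ≤ t) :
    ∃ θ : ℝ, 0 ≤ θ ∧ θ ≤ 1 ∧ glueFun f b b' z t = f b + θ • (z - f b) := by
  refine ⟨(min (max t b) b' - b) / (b' - b), ?_, ?_, ?_⟩
  · apply div_nonneg _ (by linarith)
    rw [sub_nonneg]
    exact le_min (le_trans ht (le_max_left t b)) hbb.le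
  · rw [div_le_one (by linarith)]
    have := min_le_right (max t b) b'
    linarith
  · unfold glueFun
    rw [min_eq_right ht]

lemma glueFun_of_ge {f : ℝ → H} {b b' : ℝ} {z : H} (hbb : b < b') {t : ℝ} (ht : b' ≤ t) :
    glueFun f b b' z t = z := by
  unfold glueFun
  rw [min_eq_right (le_trans hbb.le ht), max_eq_left (le_trans hbb.le ht), min_eq_right ht,
    div_self (sub_ne_zero.mpr hbb.ne'), one_smul, add_sub_cancel]

lemma glueFun_dist_z {f : ℝ → H} {b b' : ℝ} {z : H} (hbb : b < b') {t : ℝ} (ht : b ≤ t) :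
    dist (glueFun f b b' z t) z ≤ dist (f b) z := by
  obtain ⟨θ, hθ0, hθ1, he⟩ := glueFun_theta (f := f) (z := z) hbb ht
  rw [he, dist_eq_norm]
  have e : f b + θ • (z - f b) - z = (1 - θ) • (f b - z) := by module
  rw [e, norm_smul, Real.norm_eq_abs, abs_of_nonneg (by linarith), dist_eq_norm]
  nlinarith [norm_nonneg (f b - z)]

lemma glueFun_norm_le {f : ℝ → H} {b b' : ℝ} {z : H} {r : ℝ} (hbb : b < b')
    (hfr : ∀ t, ‖f t‖ ≤ r) (hz : ‖z‖ ≤ r) : ∀ t, ‖glueFun f b b' z t‖ ≤ r := by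
  intro t
  rcases le_or_gt t b with ht | ht
  · rw [glueFun_of_le hbb.le ht]; exact hfr t
  · obtain ⟨θ, hθ0, hθ1, he⟩ := glueFun_theta (f := f) (z := z) hbb ht.le
    rw [he]
    have e : f b + θ • (z - f b) = (1 - θ) • f b + θ • z := by module
    rw [e]
    calc ‖(1 - θ) • f b + θ • z‖ ≤ ‖(1 - θ) • f b‖ + ‖θ • z‖ := norm_add_le _ _
    _ = (1 - θ) * ‖f b‖ + θ * ‖z‖ := by
        rw [norm_smul, norm_smul, Real.norm_eq_abs, Real.norm_eq_abs,
          abs_of_nonneg (by linarith), abs_of_nonneg hθ0]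
    _ ≤ (1 - θ) * r + θ * r := by
        have h1 := hfr b
        nlinarith [hfr b]
    _ = r := by ring

end Glue

section Chain
variable {H : Type*} [NormedAddCommGroup H]

open Metric

lemma exists_chain {S : Set H} (hconn : IsPreconnected S) {a c : H}
    (ha : a ∈ S) (hc : c ∈ S) {ε : ℝ} (hε : 0 < ε) :
    ∃ (m : ℕ) (z : ℕ → H), z 0 = a ∧ z m = c ∧ (∀ j, j ≤ m → z j ∈ S) ∧
      ∀ j, j < m → dist (z j) (z (j+1)) < ε := by
  classical
  set R : Set H := {x | x ∈ S ∧ ∃ (m : ℕ) (z : ℕ → H), z 0 = a ∧ z m = x ∧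
    (∀ j, j ≤ m → z j ∈ S) ∧ ∀ j, j < m → dist (z j) (z (j+1)) < ε} with hR
  have haR : a ∈ R := by
    refine ⟨ha, 0, fun _ => a, rfl, rfl, fun j _ => ha, fun j hj => by omega⟩
  have hext : ∀ p ∈ R, ∀ x ∈ S, dist p x < ε → x ∈ R := by
    rintro p ⟨hpS, m, z, hz0, hzm, hzS, hzd⟩ x hxS hpx
    refine ⟨hxS, m + 1, fun j => if j ≤ m then z j else x, ?_, ?_, ?_, ?_⟩
    · simp [Nat.zero_le]; exact hz0
    · simp
    · intro j hj
      by_cases h : j ≤ m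
      · simp [h]; exact hzS j h
      · simp [h]; exact hxS
    · intro j hj
      rcases Nat.lt_or_ge j m with h | h
      · have h1 : j ≤ m := h.le
        have h2 : j + 1 ≤ m := h
        simp [h1, h2]
        exact hzd j h
      · have hjm : j = m := by omega
        subst hjm
        have h1 : j ≤ j := le_refl j
        have h2 : ¬ (j + 1 ≤ j) := by omega
        simp [h1, h2, hzm]
        exact hpx
  set U : Set H := ⋃ x ∈ R, ball x ε with hU
  set V : Set H := ⋃ x ∈ S \ R, ball x ε with hV
  have hUopen : IsOpen U := isOpen_biUnion fun _ _ => isOpen_ball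
  have hVopen : IsOpen V := isOpen_biUnion fun _ _ => isOpen_ball
  have keyU : ∀ x ∈ S, x ∈ U → x ∈ R := by
    intro x hxS hxU
    obtain ⟨p, hpR, hxp⟩ := by
      simpa only [hU, mem_iUnion, exists_prop] using hxU
    exact hext p hpR x hxS (by rw [dist_comm]; exact mem_ball.mp hxp)
  have keyV : ∀ x ∈ S, x ∈ V → x ∉ R := by
    intro x hxS hxV hxR
    obtain ⟨p, hpSV, hxp⟩ := by
      simpa only [hV, mem_iUnion, exists_prop] using hxV
    exact hpSV.2 (hext x hxR p hpSV.1 (mem_ball.mp hxp))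
  have hcover : S ⊆ U ∪ V := by
    intro x hxS
    by_cases h : x ∈ R
    · left; exact Set.mem_biUnion h (mem_ball_self hε)
    · right; exact Set.mem_biUnion ⟨hxS, h⟩ (mem_ball_self hε)
  by_cases hcR : c ∈ R
  · obtain ⟨_, m, z, hz0, hzm, hzS, hzd⟩ := hcR
    exact ⟨m, z, hz0, hzm, hzS, hzd⟩
  · exfalso
    have hcV : c ∈ V := by
      rcases hcover hc with h | h
      · exact absurd (keyU c hc h) hcR
      · exact h
    obtain ⟨x, hxS, hxUV⟩ := hconn U V hUopen hVopen hcover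
      ⟨a, ha, Set.mem_biUnion haR (mem_ball_self hε)⟩ ⟨c, hc, hcV⟩
    exact keyV x hxS hxUV.2 (keyU x hxS hxUV.1)

end Chain


section Stage1
variable {H : Type*} [NormedAddCommGroup H] [NormedSpace ℝ H]

lemma lsc_ball {D : ℝ → Set H} {A : Set ℝ} (hlsc : LscOn D A) {b : ℝ} (hb : b ∈ A)
    {c : H} (hc : c ∈ D b) {σ : ℝ} (hσ : 0 < σ) :
    ∃ h > 0, ∀ t ∈ A, |t - b| < h → ∃ w ∈ D t, dist w c < σ := by
  have h1 := hlsc b hb (ball c σ) isOpen_ball ⟨c, hc, mem_ball_self hσ⟩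
  rw [Metric.mem_nhdsWithin_iff] at h1
  obtain ⟨h, hh, hsub⟩ := h1
  refine ⟨h, hh, ?_⟩
  intro t ht hdist
  have h2 : t ∈ ball b h ∩ A := ⟨by rw [mem_ball, Real.dist_eq]; exact hdist, ht⟩
  obtain ⟨-, w, hw, hwb⟩ := hsub h2
  exact ⟨w, hw, mem_ball.mp hwb⟩

lemma traverse (D : ℝ → Set H) (T δ σ r : ℝ) (hσ : 0 < σ) (hδ : 4 * σ ≤ δ) :
    ∀ (m : ℕ) (z : ℕ → H) (b β : ℝ), b < β →
      (∀ j, j ≤ m → ∀ t, t ∈ Icc (0:ℝ) T → b ≤ t → t ≤ β →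
        ∃ w ∈ D t, dist (z j) w ≤ σ) →
      (∀ j, j < m → dist (z j) (z (j+1)) ≤ 3 * σ) →
      (∀ j, j ≤ m → ‖z j‖ ≤ r) →
      ∀ f : ℝ → H, Continuous f → (∀ t', b ≤ t' → f t' = f b) →
        dist (f b) (z 0) ≤ 3 * σ →
        (∀ t, t ∈ Icc (0:ℝ) T → t ≤ b → ∃ w ∈ D t, dist (f t) w ≤ δ) →
        (∀ t, ‖f t‖ ≤ r) →
        ∃ b', b < b' ∧ b' ≤ β ∧ ∃ f' : ℝ → H, Continuous f' ∧
          (∀ t', b' ≤ t' → f' t' = f' b') ∧ f' b' = z m ∧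
          (∀ t, t ∈ Icc (0:ℝ) T → t ≤ b' → ∃ w ∈ D t, dist (f' t) w ≤ δ) ∧
          (∀ t, ‖f' t‖ ≤ r) := by
  intro m
  induction m with
  | zero =>
    intro z b β hbβ win steps znorm f hf hconst hstart hgood hfr
    set b' := (b + β) / 2 with hb'
    have hbb' : b < b' := by rw [hb']; linarith
    have hb'β : b' ≤ β := by rw [hb']; linarith
    set f' := glueFun f b b' (z 0) with hf'
    refine ⟨b', hbb', hb'β, f', glueFun_continuous b b' (z 0) hf, ?_, ?_, ?_, ?_⟩
    · intro t' ht'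
      rw [hf', glueFun_of_ge hbb' ht', glueFun_of_ge hbb' le_rfl]
    · rw [hf', glueFun_of_ge hbb' le_rfl]
    · intro t htI htb'
      rcases le_or_gt t b with h1 | h1
      · rw [hf', glueFun_of_le hbb'.le h1]
        exact hgood t htI h1
      · obtain ⟨w, hwD, hwd⟩ := win 0 le_rfl t htI h1.le (le_trans htb' hb'β)
        refine ⟨w, hwD, ?_⟩
        have h2 : dist (f' t) (z 0) ≤ dist (f b) (z 0) := by
          rw [hf']
          exact glueFun_dist_z hbb' h1.le
        calc dist (f' t) w ≤ dist (f' t) (z 0) + dist (z 0) w := dist_triangle _ _ _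
        _ ≤ 3 * σ + σ := by linarith
        _ ≤ δ := by linarith
    · intro t
      rw [hf']
      exact glueFun_norm_le hbb' hfr (znorm 0 le_rfl) t
  | succ m ih =>
    intro z b β hbβ win steps znorm f hf hconst hstart hgood hfr
    set b₁ := (b + β) / 2 with hb₁
    have hbb₁ : b < b₁ := by rw [hb₁]; linarith
    have hb₁β : b₁ < β := by rw [hb₁]; linarith
    set f₁ := glueFun f b b₁ (z 0) with hf₁
    have hf₁c : Continuous f₁ := glueFun_continuous b b₁ (z 0) hf
    have hf₁const : ∀ t', b₁ ≤ t' → f₁ t' = f₁ b₁ := by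
      intro t' ht'
      rw [hf₁, glueFun_of_ge hbb₁ ht', glueFun_of_ge hbb₁ le_rfl]
    have hf₁b₁ : f₁ b₁ = z 0 := by rw [hf₁, glueFun_of_ge hbb₁ le_rfl]
    have hf₁good : ∀ t, t ∈ Icc (0:ℝ) T → t ≤ b₁ → ∃ w ∈ D t, dist (f₁ t) w ≤ δ := by
      intro t htI htb₁
      rcases le_or_gt t b with h1 | h1
      · rw [hf₁, glueFun_of_le hbb₁.le h1]
        exact hgood t htI h1
      · obtain ⟨w, hwD, hwd⟩ := win 0 (by omega) t htI h1.le (le_trans htb₁ hb₁β.le)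
        refine ⟨w, hwD, ?_⟩
        have h2 : dist (f₁ t) (z 0) ≤ dist (f b) (z 0) := by
          rw [hf₁]
          exact glueFun_dist_z hbb₁ h1.le
        calc dist (f₁ t) w ≤ dist (f₁ t) (z 0) + dist (z 0) w := dist_triangle _ _ _
        _ ≤ 3 * σ + σ := by linarith
        _ ≤ δ := by linarith
    have hf₁r : ∀ t, ‖f₁ t‖ ≤ r := by
      intro t
      rw [hf₁]
      exact glueFun_norm_le hbb₁ hfr (znorm 0 (by omega)) t
    have hstart₁ : dist (f₁ b₁) (z 1) ≤ 3 * σ := by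
      rw [hf₁b₁]
      exact steps 0 (by omega)
    obtain ⟨b', hb'gt, hb'le, f', hc', hconst', hval', hgood', hr'⟩ :=
      ih (fun j => z (j+1)) b₁ β hb₁β
        (fun j hj t htI hbt htβ => win (j+1) (by omega) t htI (le_trans hbb₁.le hbt) htβ)
        (fun j hj => steps (j+1) (by omega))
        (fun j hj => znorm (j+1) (by omega))
        f₁ hf₁c hf₁const hstart₁ hf₁good hf₁r
    exact ⟨b', lt_trans hbb₁ hb'gt, hb'le, f', hc', hconst', hval', hgood', hr'⟩

set_option maxHeartbeats 1000000 in
lemma stage1 (D : ℝ → Set H) (T r : ℝ) (hT : 0 < T) (hr : 0 ≤ r)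
    (hne : ∀ t ∈ Icc (0:ℝ) T, (D t).Nonempty)
    (hconn : ∀ t ∈ Icc (0:ℝ) T, IsPreconnected (D t))
    (hsub : ∀ t ∈ Icc (0:ℝ) T, D t ⊆ closedBall (0:H) r)
    (hlsc : LscOn D (Icc (0:ℝ) T))
    (δ : ℝ) (hδ : 0 < δ) :
    ∃ f : ℝ → H, Continuous f ∧ (∀ t ∈ Icc (0:ℝ) T, ∃ w ∈ D t, dist (f t) w ≤ δ) ∧
      ∀ t, ‖f t‖ ≤ r := by
  classical
  set σ := δ/8 with hσdef
  have hσ : 0 < σ := by positivity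
  have h4σ : 4*σ ≤ δ := by rw [hσdef]; linarith
  set A : Set ℝ := {b | b ∈ Icc (0:ℝ) T ∧ ∃ f : ℝ → H, Continuous f ∧
    (∀ t, t ∈ Icc (0:ℝ) T → t ≤ b → ∃ w ∈ D t, dist (f t) w ≤ δ) ∧
    (∀ t', b ≤ t' → f t' = f b) ∧ (∀ t, ‖f t‖ ≤ r) ∧
    ∃ c ∈ D b, dist (f b) c ≤ 2*σ} with hA
  have h0I : (0:ℝ) ∈ Icc (0:ℝ) T := left_mem_Icc.mpr hT.le
  obtain ⟨c₀, hc₀⟩ := hne 0 h0I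
  have h0A : (0:ℝ) ∈ A := by
    refine ⟨h0I, fun _ => c₀, continuous_const, ?_, fun _ _ => rfl, ?_,
      c₀, hc₀, by simp [hσ.le]⟩
    · intro t htI ht0
      have he : t = 0 := le_antisymm ht0 htI.1
      subst he
      exact ⟨c₀, hc₀, by simp [hδ.le]⟩
    · intro t
      have := hsub 0 h0I hc₀
      rwa [mem_closedBall, dist_zero_right] at this
  have hAbdd : BddAbove A := ⟨T, fun b hb => hb.1.2⟩
  have hAne : A.Nonempty := ⟨0, h0A⟩
  set b₀ := sSup A with hb₀
  have hb₀mem : b₀ ∈ Icc (0:ℝ) T :=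
    ⟨le_csSup hAbdd h0A, csSup_le hAne (fun b hb => hb.1.2)⟩
  obtain ⟨cstar, hcstar⟩ := hne b₀ hb₀mem
  obtain ⟨h, hhpos, hwin⟩ := lsc_ball hlsc hb₀mem hcstar hσ
  obtain ⟨b, hbA, hbgt⟩ := exists_lt_of_lt_csSup hAne (show b₀ - h < b₀ by linarith)
  have hbb₀ : b ≤ b₀ := le_csSup hAbdd hbA
  obtain ⟨hbI, f, hfc, hfgood, hfconst, hfnorm, c, hcD, hcdist⟩ := hbA
  by_cases hbT : b = T
  · exact ⟨f, hfc, fun t ht => hfgood t ht (by rw [hbT]; exact ht.2), hfnorm⟩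
  have hbltT : b < T := lt_of_le_of_ne hbI.2 hbT
  obtain ⟨e, heD, hedist⟩ := hwin b hbI (by rw [abs_sub_lt_iff]; constructor <;> linarith)
  obtain ⟨m, z, hz0, hzm, hzS, hzd⟩ := exists_chain (hconn b hbI) hcD heD hσ
  have hwins : ∀ j : ℕ, j ≤ m → ∃ hj > 0, ∀ t ∈ Icc (0:ℝ) T, |t - b| < hj →
      ∃ w ∈ D t, dist w (z j) < σ := fun j hj => lsc_ball hlsc hbI (hzS j hj) hσ
  choose! hj hjpos hjwin using hwins
  set h' := (Finset.range (m+1)).inf' ⟨0, by simp⟩ hj with hh'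
  have hh'pos : 0 < h' := by
    rw [hh']; refine (Finset.lt_inf'_iff _).2 ?_
    intro j hjm
    exact hjpos j (by simpa using Nat.lt_succ_iff.mp (Finset.mem_range.mp hjm))
  have hh'le : ∀ j, j ≤ m → h' ≤ hj j := by
    intro j hjm
    exact Finset.inf'_le _ (Finset.mem_range.mpr (by omega))
  set γ := min T (b₀ + h/2) with hγ
  set β := min γ (b + h'/2) with hβ
  have hbβ : b < β := by
    apply lt_min
    · apply lt_min hbltT
      linarith
    · linarith
  have hwin' : ∀ j, j ≤ m → ∀ t, t ∈ Icc (0:ℝ) T → b ≤ t → t ≤ β →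
      ∃ w ∈ D t, dist (z j) w ≤ σ := by
    intro j hjm t htI hbt htβ
    have h1 : t - b < hj j := by
      have h2 : t ≤ b + h'/2 := le_trans htβ (min_le_right _ _)
      have h3 := hh'le j hjm
      linarith
    obtain ⟨w, hwD, hwd⟩ := hjwin j hjm t htI (by rw [abs_sub_lt_iff]; constructor <;> linarith)
    exact ⟨w, hwD, by rw [dist_comm]; exact hwd.le⟩
  have hznorm : ∀ j, j ≤ m → ‖z j‖ ≤ r := by
    intro j hjm
    have := hsub b hbI (hzS j hjm)
    rwa [mem_closedBall, dist_zero_right] at this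
  have hstart : dist (f b) (z 0) ≤ 3 * σ := by rw [hz0]; linarith
  obtain ⟨b', hb'gt, hb'le, f', hf'c, hf'const, hf'val, hf'good, hf'norm⟩ :=
    traverse D T δ σ r hσ h4σ m z b β hbβ hwin'
      (fun j hjm => (hzd j hjm).le.trans (by linarith))
      hznorm f hfc hfconst hstart hfgood hfnorm
  have hβγ : β ≤ γ := min_le_left _ _
  have hb'γ : b' ≤ γ := le_trans hb'le hβγ
  have hγI : γ ∈ Icc (0:ℝ) T := by
    constructor
    · apply le_min hT.le
      linarith [hb₀mem.1]
    · exact min_le_left _ _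
  have hγge : b₀ ≤ γ := le_min hb₀mem.2 (by linarith)
  have hγwin : |γ - b₀| < h := by
    rw [abs_sub_lt_iff]
    have h1 : γ ≤ b₀ + h/2 := min_le_right _ _
    constructor <;> linarith
  have hγub : γ ≤ b₀ + h/2 := min_le_right _ _
  have hγA : γ ∈ A := by
    refine ⟨hγI, f', hf'c, ?_, ?_, hf'norm, ?_⟩
    · intro t htI htγ
      rcases le_or_gt t b' with h1 | h1
      · exact hf'good t htI h1
      · have hf't : f' t = z m := by rw [hf'const t h1.le, hf'val]
        obtain ⟨w, hwD, hwc⟩ := hwin t htI (by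
          rw [abs_sub_lt_iff]
          constructor <;> linarith [hb'gt, hbgt, hγub])
        refine ⟨w, hwD, ?_⟩
        rw [hf't, hzm]
        calc dist e w ≤ dist e cstar + dist cstar w := dist_triangle _ _ _
        _ ≤ σ + σ := by
            rw [dist_comm cstar w]
            exact add_le_add hedist.le hwc.le
        _ ≤ δ := by linarith
    · intro t' ht'
      rw [hf'const t' (le_trans hb'γ ht'), hf'const γ hb'γ]
    · obtain ⟨cγ, hcγD, hcγc⟩ := hwin γ hγI hγwin
      refine ⟨cγ, hcγD, ?_⟩
      rw [hf'const γ hb'γ, hf'val, hzm]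
      calc dist e cγ ≤ dist e cstar + dist cstar cγ := dist_triangle _ _ _
      _ ≤ σ + σ := by
          rw [dist_comm cstar cγ]
          exact add_le_add hedist.le hcγc.le
      _ = 2*σ := by ring
  have hγle : γ ≤ b₀ := le_csSup hAbdd hγA
  rcases le_or_gt T (b₀ + h/2) with hc1 | hc1
  · have hγT : γ = T := min_eq_left hc1
    rw [hγT] at hγA
    obtain ⟨-, g, hgc, hggood, -, hgnorm, -⟩ := hγA
    exact ⟨g, hgc, fun t ht => hggood t ht ht.2, hgnorm⟩
  · exfalso
    have hγeq : γ = b₀ + h/2 := min_eq_right hc1.le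
    rw [hγeq] at hγle
    linarith

end Stage1


section Refine
variable {H : Type*} [NormedAddCommGroup H] [InnerProductSpace ℝ H] [CompleteSpace H]

set_option maxHeartbeats 2000000 in
lemma refineStep (ρ : ℝ≥0∞) (D : ℝ → Set H) (T r : ℝ) (hT : 0 < T) (hr : 0 ≤ r)
    (hne : ∀ t ∈ Icc (0:ℝ) T, (D t).Nonempty)
    (hcl : ∀ t ∈ Icc (0:ℝ) T, IsClosed (D t))
    (hprox : ∀ t ∈ Icc (0:ℝ) T, UniformlyProxRegular ρ (D t))
    (hsub : ∀ t ∈ Icc (0:ℝ) T, D t ⊆ closedBall (0:H) r)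
    (hlsc : LscOn D (Icc (0:ℝ) T))
    (f : ℝ → H) (hf : Continuous f)
    (δ' : ℝ) (hδ'0 : 0 < δ') (hδm : δ' * (100 * (2*ρ.toReal)⁻¹) ≤ 1/4)
    (happ : ∀ t ∈ Icc (0:ℝ) T, ∃ w ∈ D t, dist (f t) w ≤ δ') :
    ∃ f' : ℝ → H, Continuous f' ∧ (∀ t, ‖f' t‖ ≤ r) ∧
      (∀ t ∈ Icc (0:ℝ) T, ∃ w ∈ D t, dist (f' t) w ≤ δ'/2) ∧
      ∀ t ∈ Icc (0:ℝ) T, dist (f' t) (f t) ≤ 2*δ' := by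
  classical
  set ε := δ'/8 with hε
  have hεpos : 0 < ε := by positivity
  -- local data at every point of the interval
  have hlocal : ∀ p : Icc (0:ℝ) T, ∃ rad > 0, ∃ c : H, c ∈ D ↑p ∧ dist (f ↑p) c ≤ δ' ∧
      (∀ t ∈ Icc (0:ℝ) T, |t - ↑p| < rad → ∃ w ∈ D t, dist w c < ε) ∧
      (∀ t : ℝ, |t - ↑p| < rad → dist (f t) (f ↑p) ≤ ε) := by
    intro p
    obtain ⟨c, hcD, hcd⟩ := happ ↑p p.2
    obtain ⟨rad₁, hrad₁, hwin⟩ := lsc_ball hlsc p.2 hcD hεpos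
    obtain ⟨rad₂, hrad₂, hcont⟩ := Metric.continuous_iff.mp hf ↑p ε hεpos
    refine ⟨min rad₁ rad₂, lt_min hrad₁ hrad₂, c, hcD, hcd, ?_, ?_⟩
    · intro t ht htd
      exact hwin t ht (lt_of_lt_of_le htd (min_le_left _ _))
    · intro t htd
      have h1 : dist t ↑p < rad₂ := by
        rw [Real.dist_eq]
        exact lt_of_lt_of_le htd (min_le_right _ _)
      exact (hcont t h1).le
  choose rad hradpos c hcD hcf hcwin hccont using hlocal
  -- finite subcover
  have hcov : Icc (0:ℝ) T ⊆ ⋃ p : Icc (0:ℝ) T, ball (↑p) (rad p) := by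
    intro t ht
    exact Set.mem_iUnion.mpr ⟨⟨t, ht⟩, mem_ball_self (hradpos ⟨t, ht⟩)⟩
  obtain ⟨F, hF⟩ := isCompact_Icc.elim_finite_subcover _ (fun p => isOpen_ball) hcov
  -- tent partition of unity
  set ψ : Icc (0:ℝ) T → ℝ → ℝ := fun p t => max (rad p - |t - ↑p|) 0 with hψ
  have hψcont : ∀ p, Continuous (ψ p) := by
    intro p
    apply Continuous.max _ continuous_const
    exact continuous_const.sub (continuous_id.sub continuous_const).abs
  have hψnn : ∀ (p : Icc (0:ℝ) T) (t : ℝ), 0 ≤ ψ p t := by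
    intro p t
    simp only [hψ]
    exact le_max_right _ _
  have hψpos1 : ∀ (p : Icc (0:ℝ) T) (t : ℝ), |t - ↑p| < rad p → 0 < ψ p t := by
    intro p t h1
    simp only [hψ, lt_max_iff]
    left; linarith
  have hψpos2 : ∀ (p : Icc (0:ℝ) T) (t : ℝ), 0 < ψ p t → |t - ↑p| < rad p := by
    intro p t h1
    by_contra hcon
    push_neg at hcon
    simp only [hψ] at h1
    rw [max_eq_right (by linarith : rad p - |t - ↑p| ≤ 0)] at h1
    exact lt_irrefl 0 h1
  set Ssum : ℝ → ℝ := fun t => ∑ p ∈ F, ψ p t with hSsum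
  have hScont : Continuous Ssum := continuous_finset_sum _ (fun p _ => hψcont p)
  have hSpos : ∀ t ∈ Icc (0:ℝ) T, 0 < Ssum t := by
    intro t ht
    obtain ⟨p, hpF, hpball⟩ := Set.mem_iUnion₂.mp (hF ht)
    apply Finset.sum_pos' (fun q _ => hψnn q t) ⟨p, hpF, ?_⟩
    apply hψpos1
    rw [← Real.dist_eq]
    exact mem_ball.mp hpball
  obtain ⟨t₀, ht₀I, ht₀min⟩ := isCompact_Icc.exists_isMinOn (nonempty_Icc.mpr hT.le)
    hScont.continuousOn
  set m₀ := Ssum t₀ with hm₀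
  have hm₀pos : 0 < m₀ := hSpos t₀ ht₀I
  set den : ℝ → ℝ := fun t => max (Ssum t) (m₀/2) with hden
  have hdenpos : ∀ t, 0 < den t := by
    intro t
    simp only [hden, lt_max_iff]
    right; linarith
  have hdencont : Continuous den := by
    simp only [hden]
    exact hScont.max continuous_const
  have hdeneq : ∀ t ∈ Icc (0:ℝ) T, den t = Ssum t := by
    intro t ht
    simp only [hden]
    apply max_eq_left
    have := (isMinOn_iff.mp ht₀min) t ht
    linarith
  set φ : Icc (0:ℝ) T → ℝ → ℝ := fun p t => ψ p t / den t with hφ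
  have hφnn : ∀ (p : Icc (0:ℝ) T) (t : ℝ), 0 ≤ φ p t := by
    intro p t
    simp only [hφ]
    exact div_nonneg (hψnn p t) (hdenpos t).le
  have hφcont : ∀ p, Continuous (φ p) := by
    intro p
    simp only [hφ]
    exact (hψcont p).div hdencont (fun t => (hdenpos t).ne')
  set f' : ℝ → H := fun t => ∑ p ∈ F, φ p t • c p with hf'
  have hf'cont : Continuous f' := by
    simp only [hf']
    exact continuous_finset_sum _ (fun p _ => (hφcont p).smul continuous_const)
  have hφsumle : ∀ t, ∑ p ∈ F, φ p t ≤ 1 := by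
    intro t
    simp only [hφ]
    rw [← Finset.sum_div, div_le_one (hdenpos t)]
    simp only [hden]
    exact le_max_left _ _
  have hcnorm : ∀ p, ‖c p‖ ≤ r := by
    intro p
    have := hsub ↑p p.2 (hcD p)
    rwa [mem_closedBall, dist_zero_right] at this
  have hf'norm : ∀ t, ‖f' t‖ ≤ r := by
    intro t
    simp only [hf']
    calc ‖∑ p ∈ F, φ p t • c p‖ ≤ ∑ p ∈ F, ‖φ p t • c p‖ := norm_sum_le _ _
    _ = ∑ p ∈ F, φ p t * ‖c p‖ := by
        apply Finset.sum_congr rfl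
        intro p _
        rw [norm_smul, Real.norm_eq_abs, abs_of_nonneg (hφnn p t)]
    _ ≤ ∑ p ∈ F, φ p t * r := by
        apply Finset.sum_le_sum
        intro p _
        exact mul_le_mul_of_nonneg_left (hcnorm p) (hφnn p t)
    _ = (∑ p ∈ F, φ p t) * r := by rw [Finset.sum_mul]
    _ ≤ 1 * r := mul_le_mul_of_nonneg_right (hφsumle t) hr
    _ = r := one_mul r
  refine ⟨f', hf'cont, hf'norm, ?_, ?_⟩
  · -- the approximation estimate
    intro t ht
    set J := F.filter (fun p => 0 < ψ p t) with hJ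
    have hJsub : J ⊆ F := Finset.filter_subset _ _
    have hJmem : ∀ p ∈ J, 0 < ψ p t := fun p hp => (Finset.mem_filter.mp hp).2
    have hJne : J.Nonempty := by
      obtain ⟨p, hpF, hpball⟩ := Set.mem_iUnion₂.mp (hF ht)
      exact ⟨p, Finset.mem_filter.mpr ⟨hpF, hψpos1 p t (by
        rw [← Real.dist_eq]; exact mem_ball.mp hpball)⟩⟩
    have hsumJ : ∑ p ∈ J, ψ p t = ∑ p ∈ F, ψ p t := by
      apply Finset.sum_filter_of_ne
      intro p _ hne'
      exact lt_of_le_of_ne (hψnn p t) (Ne.symm hne')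
    have hφsum1 : ∑ p ∈ J, φ p t = 1 := by
      simp only [hφ]
      rw [← Finset.sum_div, hsumJ, hdeneq t ht, div_self (hSpos t ht).ne']
    have hf'J : f' t = ∑ p ∈ J, φ p t • c p := by
      simp only [hf']
      symm
      apply Finset.sum_filter_of_ne
      intro p _ hne'
      by_contra hcon
      push_neg at hcon
      have h0 : ψ p t = 0 := le_antisymm hcon (hψnn p t)
      apply hne'
      simp only [hφ, h0]
      simp
    -- choose points of D t near the local centers
    have hddex : ∀ p : Icc (0:ℝ) T, p ∈ J → ∃ w, w ∈ D t ∧ dist w (c p) < ε := by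
      intro p hp
      obtain ⟨w, hw1, hw2⟩ := hcwin p t ht (hψpos2 p t (hJmem p hp))
      exact ⟨w, hw1, hw2⟩
    choose! dd hddD hddc using hddex
    have hcft : ∀ p ∈ J, dist (c p) (f t) ≤ δ' + ε := by
      intro p hp
      have h1 : dist (f t) (f ↑p) ≤ ε := hccont p t (hψpos2 p t (hJmem p hp))
      calc dist (c p) (f t) ≤ dist (c p) (f ↑p) + dist (f ↑p) (f t) := dist_triangle _ _ _
      _ ≤ δ' + ε := by
          rw [dist_comm (c p) (f ↑p), dist_comm (f ↑p) (f t)]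
          exact add_le_add (hcf p) h1
    set Δ := 2*δ' + 4*ε with hΔ
    have hpair : ∀ p ∈ J, ∀ p' ∈ J, dist (dd p) (dd p') ≤ Δ := by
      intro p hp p' hp'
      have t1 := dist_triangle (dd p) (c p) (f t)
      have t2 := dist_triangle (f t) (c p') (dd p')
      have t3 := dist_triangle (dd p) (f t) (dd p')
      have e1 : dist (dd p) (c p) ≤ ε := (hddc p hp).le
      have e2 := hcft p hp
      have e3 : dist (f t) (c p') = dist (c p') (f t) := dist_comm _ _
      have e4 := hcft p' hp'
      have e5 : dist (c p') (dd p') = dist (dd p') (c p') := dist_comm _ _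
      have e6 : dist (dd p') (c p') ≤ ε := (hddc p' hp').le
      have e7 : Δ = 2*δ' + 4*ε := hΔ
      linarith
    obtain ⟨w, hwD, hwd⟩ := prox_hull ρ (D t) (hcl t ht) (hne t ht) (hprox t ht)
      J hJne (fun p => φ p t) (fun p _ => hφnn p t) hφsum1 dd (fun p hp => hddD p hp) Δ
      (by rw [hΔ]; linarith [hεpos.le, hδ'0.le]) hpair (δ'/8) (by positivity)
    have hqf' : dist (f' t) (∑ p ∈ J, φ p t • dd p) ≤ ε := by
      rw [hf'J, dist_eq_norm]
      have e : (∑ p ∈ J, φ p t • c p) - (∑ p ∈ J, φ p t • dd p)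
          = ∑ p ∈ J, φ p t • (c p - dd p) := by
        rw [← Finset.sum_sub_distrib]
        apply Finset.sum_congr rfl
        intro p _
        rw [smul_sub]
      rw [e]
      calc ‖∑ p ∈ J, φ p t • (c p - dd p)‖ ≤ ∑ p ∈ J, ‖φ p t • (c p - dd p)‖ :=
          norm_sum_le _ _
      _ ≤ ∑ p ∈ J, φ p t * ε := by
          apply Finset.sum_le_sum
          intro p hp
          rw [norm_smul, Real.norm_eq_abs, abs_of_nonneg (hφnn p t)]
          apply mul_le_mul_of_nonneg_left _ (hφnn p t)
          rw [← dist_eq_norm, dist_comm]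
          exact (hddc p hp).le
      _ = 1 * ε := by rw [← Finset.sum_mul, hφsum1]
      _ = ε := one_mul ε
    refine ⟨w, hwD, ?_⟩
    have hnum : (2 * ρ.toReal)⁻¹ * (4 * Δ^2) ≤ δ'/16 := by
      have e1 : (2 * ρ.toReal)⁻¹ * (4 * Δ^2) = (δ' * (100 * (2*ρ.toReal)⁻¹)) * (δ'/4) := by
        rw [hΔ, hε]; ring
      rw [e1]
      calc (δ' * (100 * (2*ρ.toReal)⁻¹)) * (δ'/4) ≤ (1/4) * (δ'/4) :=
          mul_le_mul_of_nonneg_right hδm (by positivity)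
      _ = δ'/16 := by ring
    calc dist (f' t) w ≤ dist (f' t) (∑ p ∈ J, φ p t • dd p)
          + dist (∑ p ∈ J, φ p t • dd p) w := dist_triangle _ _ _
    _ ≤ ε + ((2 * ρ.toReal)⁻¹ * (4 * Δ^2) + δ'/8) := add_le_add hqf' hwd
    _ ≤ δ'/8 + (δ'/16 + δ'/8) := by
        rw [hε]
        linarith [hnum]
    _ ≤ δ'/2 := by linarith
  · -- proximity to the previous approximation
    intro t ht
    set J := F.filter (fun p => 0 < ψ p t) with hJ
    have hJmem : ∀ p ∈ J, 0 < ψ p t := fun p hp => (Finset.mem_filter.mp hp).2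
    have hsumJ : ∑ p ∈ J, ψ p t = ∑ p ∈ F, ψ p t := by
      apply Finset.sum_filter_of_ne
      intro p _ hne'
      exact lt_of_le_of_ne (hψnn p t) (Ne.symm hne')
    have hφsum1 : ∑ p ∈ J, φ p t = 1 := by
      simp only [hφ]
      rw [← Finset.sum_div, hsumJ, hdeneq t ht, div_self (hSpos t ht).ne']
    have hf'J : f' t = ∑ p ∈ J, φ p t • c p := by
      simp only [hf']
      symm
      apply Finset.sum_filter_of_ne
      intro p _ hne'
      by_contra hcon
      push_neg at hcon
      have h0 : ψ p t = 0 := le_antisymm hcon (hψnn p t)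
      apply hne'
      simp only [hφ, h0]
      simp
    have hcft : ∀ p ∈ J, dist (c p) (f t) ≤ δ' + ε := by
      intro p hp
      have h1 : dist (f t) (f ↑p) ≤ ε := hccont p t (hψpos2 p t (hJmem p hp))
      calc dist (c p) (f t) ≤ dist (c p) (f ↑p) + dist (f ↑p) (f t) := dist_triangle _ _ _
      _ ≤ δ' + ε := by
          rw [dist_comm (c p) (f ↑p), dist_comm (f ↑p) (f t)]
          exact add_le_add (hcf p) h1
    rw [hf'J, dist_eq_norm]
    have e : (∑ p ∈ J, φ p t • c p) - f t = ∑ p ∈ J, φ p t • (c p - f t) := by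
      have e2 : ∑ p ∈ J, φ p t • (c p - f t)
          = (∑ p ∈ J, φ p t • c p) - (∑ p ∈ J, φ p t • f t) := by
        rw [← Finset.sum_sub_distrib]
        apply Finset.sum_congr rfl
        intro p _
        rw [smul_sub]
      rw [e2, ← Finset.sum_smul, hφsum1, one_smul]
    rw [e]
    calc ‖∑ p ∈ J, φ p t • (c p - f t)‖ ≤ ∑ p ∈ J, ‖φ p t • (c p - f t)‖ := norm_sum_le _ _
    _ ≤ ∑ p ∈ J, φ p t * (δ' + ε) := by
        apply Finset.sum_le_sum
        intro p hp
        rw [norm_smul, Real.norm_eq_abs, abs_of_nonneg (hφnn p t)]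
        apply mul_le_mul_of_nonneg_left _ (hφnn p t)
        rw [← dist_eq_norm]
        exact hcft p hp
    _ = 1 * (δ' + ε) := by rw [← Finset.sum_mul, hφsum1]
    _ ≤ 2*δ' := by rw [one_mul, hε]; linarith

end Refine


section Selection
variable {H : Type*} [NormedAddCommGroup H] [InnerProductSpace ℝ H] [CompleteSpace H]

set_option maxHeartbeats 1000000 in
lemma exists_selection (ρ : ℝ≥0∞) (D : ℝ → Set H) (T r : ℝ) (hT : 0 < T) (hr : 0 ≤ r)
    (hne : ∀ t ∈ Icc (0:ℝ) T, (D t).Nonempty)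
    (hcl : ∀ t ∈ Icc (0:ℝ) T, IsClosed (D t))
    (hconn : ∀ t ∈ Icc (0:ℝ) T, IsPreconnected (D t))
    (hprox : ∀ t ∈ Icc (0:ℝ) T, UniformlyProxRegular ρ (D t))
    (hsub : ∀ t ∈ Icc (0:ℝ) T, D t ⊆ closedBall (0:H) r)
    (hlsc : LscOn D (Icc (0:ℝ) T)) :
    ∃ g : ℝ → H, Continuous g ∧ (∀ t ∈ Icc (0:ℝ) T, g t ∈ D t) ∧ ∀ t, ‖g t‖ ≤ r := by
  classical
  set κ := (2 * ρ.toReal)⁻¹ with hκ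
  have hκ0 : 0 ≤ κ := by rw [hκ]; positivity
  set δ₀ := 1 / (400 * (κ + 1)) with hδ₀
  have hδ₀pos : 0 < δ₀ := by rw [hδ₀]; positivity
  set δs : ℕ → ℝ := fun n => δ₀ * (1/2:ℝ)^n with hδs
  have hδspos : ∀ n, 0 < δs n := fun n => by simp only [hδs]; positivity
  have hδcond : ∀ n, δs n * (100 * (2 * ρ.toReal)⁻¹) ≤ 1/4 := by
    intro n
    have h1 : δs n ≤ δ₀ := by
      simp only [hδs]
      have := pow_le_one₀ (by norm_num : (0:ℝ) ≤ 1/2) (by norm_num : (1/2:ℝ) ≤ 1) (n := n)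
      nlinarith [hδ₀pos.le]
    have h2 : δ₀ * (100*κ) ≤ 1/4 := by
      rw [hδ₀]
      have e : (1 / (400 * (κ + 1))) * (100 * κ) = (100*κ)/(400*(κ+1)) := by ring
      rw [e, div_le_iff₀ (by positivity)]
      nlinarith
    have h3 : δs n * (100*κ) ≤ δ₀ * (100*κ) :=
      mul_le_mul_of_nonneg_right h1 (by positivity)
    rw [← hκ]
    linarith
  have hδhalf : ∀ n, δs (n+1) = δs n / 2 := by
    intro n; simp only [hδs]; rw [pow_succ]; ring
  set P : ℕ → (ℝ → H) → Prop := fun n f => Continuous f ∧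
    (∀ t ∈ Icc (0:ℝ) T, ∃ w ∈ D t, dist (f t) w ≤ δs n) ∧ (∀ t, ‖f t‖ ≤ r) with hP
  obtain ⟨f₀, hf₀c, hf₀app, hf₀r⟩ := stage1 D T r hT hr hne hconn hsub hlsc δ₀ hδ₀pos
  have hP0 : P 0 f₀ := by
    refine ⟨hf₀c, ?_, hf₀r⟩
    intro t ht
    obtain ⟨w, hw1, hw2⟩ := hf₀app t ht
    exact ⟨w, hw1, by simpa [hδs] using hw2⟩
  have hstep : ∀ n (f : ℝ → H), P n f → ∃ f', P (n+1) f' ∧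
      ∀ t ∈ Icc (0:ℝ) T, dist (f' t) (f t) ≤ 2 * δs n := by
    intro n f hf
    obtain ⟨hfc, hfapp, hfr⟩ := hf
    obtain ⟨f', h1, h2, h3, h4⟩ := refineStep ρ D T r hT hr hne hcl hprox hsub hlsc f hfc
      (δs n) (hδspos n) (hδcond n) hfapp
    refine ⟨f', ⟨h1, ?_, h2⟩, h4⟩
    intro t ht
    obtain ⟨w, hw1, hw2⟩ := h3 t ht
    exact ⟨w, hw1, by rw [hδhalf n]; exact hw2⟩
  have hstep' : ∀ n (p : {f : ℝ → H // P n f}), ∃ f', P (n+1) f' ∧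
      ∀ t ∈ Icc (0:ℝ) T, dist (f' t) (p.1 t) ≤ 2 * δs n := fun n p => hstep n p.1 p.2
  let Fs : ∀ n : ℕ, {f : ℝ → H // P n f} := fun n =>
    Nat.rec ⟨f₀, hP0⟩ (fun n p => ⟨(hstep' n p).choose, (hstep' n p).choose_spec.1⟩) n
  have hFd : ∀ n, ∀ t ∈ Icc (0:ℝ) T, dist ((Fs (n+1)).1 t) ((Fs n).1 t) ≤ 2 * δs n :=
    fun n => (hstep' n (Fs n)).choose_spec.2
  set cl : ℝ → ℝ := fun t => max 0 (min t T) with hcldef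
  have hclcont : Continuous cl := continuous_const.max (continuous_id.min continuous_const)
  have hclmem : ∀ t, cl t ∈ Icc (0:ℝ) T := by
    intro t
    constructor
    · exact le_max_left _ _
    · simp only [hcldef]
      exact max_le hT.le (min_le_right t T)
  have hcleq : ∀ t ∈ Icc (0:ℝ) T, cl t = t := by
    intro t ht
    simp only [hcldef]
    rw [min_eq_left ht.2, max_eq_right ht.1]
  let G : ℕ → BoundedContinuousFunction ℝ H := fun n =>
    BoundedContinuousFunction.ofNormedAddCommGroup ((Fs n).1 ∘ cl)
      ((Fs n).2.1.comp hclcont) r (fun t => (Fs n).2.2.2 (cl t))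
  have hGcoe : ∀ n (t : ℝ), G n t = (Fs n).1 (cl t) := fun n t => rfl
  have hGdist : ∀ n, dist (G n) (G (n+1)) ≤ (2*δ₀) * (1/2:ℝ)^n := by
    intro n
    apply (BoundedContinuousFunction.dist_le (by positivity)).mpr
    intro t
    rw [hGcoe n t, hGcoe (n+1) t, dist_comm]
    have h1 := hFd n (cl t) (hclmem t)
    have h2 : 2 * δs n = (2*δ₀) * (1/2:ℝ)^n := by simp only [hδs]; ring
    linarith
  have hcauchy : CauchySeq G := cauchySeq_of_le_geometric (1/2) (2*δ₀) (by norm_num) hGdist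
  obtain ⟨Gl, hGl⟩ := cauchySeq_tendsto_of_complete hcauchy
  have hd0 : Filter.Tendsto (fun n => dist (G n) Gl) atTop (nhds 0) :=
    tendsto_iff_dist_tendsto_zero.mp hGl
  have hptw : ∀ t : ℝ, Filter.Tendsto (fun n => G n t) atTop (nhds (Gl t)) := by
    intro t
    rw [tendsto_iff_dist_tendsto_zero]
    exact squeeze_zero (fun n => dist_nonneg)
      (fun n => BoundedContinuousFunction.dist_coe_le_dist t) hd0
  have hδs0 : Filter.Tendsto δs atTop (nhds 0) := by
    have h1 := (tendsto_pow_atTop_nhds_zero_of_lt_one (by norm_num : (0:ℝ) ≤ 1/2)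
      (by norm_num : (1/2:ℝ) < 1)).const_mul δ₀
    simp only [hδs]
    simpa using h1
  refine ⟨⇑Gl, Gl.continuous, ?_, ?_⟩
  · intro t ht
    have hmem : Gl t ∈ closure (D t) := by
      rw [Metric.mem_closure_iff]
      intro ε hε
      have h1 : Filter.Tendsto (fun n => dist (Gl t) (G n t)) atTop (nhds 0) := by
        have h2 := tendsto_iff_dist_tendsto_zero.mp (hptw t)
        simpa [dist_comm] using h2
      have hev1 : ∀ᶠ n in atTop, dist (Gl t) (G n t) < ε/2 :=
        h1.eventually (gt_mem_nhds (by linarith))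
      have hev2 : ∀ᶠ n in atTop, δs n < ε/2 :=
        hδs0.eventually (gt_mem_nhds (by linarith))
      obtain ⟨n, hn1, hn2⟩ := (hev1.and hev2).exists
      obtain ⟨w, hwD, hwd⟩ := (Fs n).2.2.1 t ht
      refine ⟨w, hwD, ?_⟩
      have hGt : G n t = (Fs n).1 t := by rw [hGcoe n t, hcleq t ht]
      calc dist (Gl t) w ≤ dist (Gl t) (G n t) + dist (G n t) w := dist_triangle _ _ _
      _ < ε/2 + ε/2 := by
          apply add_lt_add_of_lt_of_le hn1
          rw [hGt]
          calc dist ((Fs n).1 t) w ≤ δs n := hwd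
          _ ≤ ε/2 := hn2.le
      _ = ε := by ring
    rwa [(hcl t ht).closure_eq] at hmem
  · intro t
    have h1 : ∀ n, ‖G n t‖ ≤ r := fun n => by
      rw [hGcoe n t]
      exact (Fs n).2.2.2 (cl t)
    exact le_of_tendsto (hptw t).norm (Filter.Eventually.of_forall h1)

end Selection


/-- Under (H₁), (H₂) and uniform boundedness of the values, the moving set
satisfies the bounded selection-extension property (H₃). -/
theorem selectionExtension_of_bounded_proxRegular
    {H : Type*} [NormedAddCommGroup H] [InnerProductSpace ℝ H] [CompleteSpace H]
    (T : ℝ) (hT : 0 < T) (ρ : ℝ≥0∞) (hρ : 0 < ρ) (C : ℝ → Set H)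
    (hC1 : HypH1 ρ C T) (hC2 : LscOn C (Icc (0:ℝ) T))
    (r : ℝ) (hr : 0 < r) (hbd : ∀ t ∈ Icc (0:ℝ) T, C t ⊆ closedBall (0:H) r) :
    SelectionExtension C T := by
  intro x _hx _hxC η _hη
  refine ⟨r, hr, ?_⟩
  intro K cK hK y hy hyC _hyx
  classical
  set D : ℝ → Set H := fun t => if t ∈ K then ({y t} : Set H) else C t with hD
  have hDeqK : ∀ t ∈ K, D t = {y t} := fun t ht => if_pos ht
  have hDeqC : ∀ t, t ∉ K → D t = C t := fun t ht => if_neg ht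
  have hDne : ∀ t ∈ Icc (0:ℝ) T, (D t).Nonempty := by
    intro t ht
    by_cases h : t ∈ K
    · rw [hDeqK t h]; exact ⟨y t, rfl⟩
    · rw [hDeqC t h]; exact (hC1 t ht).1
  have hDcl : ∀ t ∈ Icc (0:ℝ) T, IsClosed (D t) := by
    intro t ht
    by_cases h : t ∈ K
    · rw [hDeqK t h]; exact isClosed_singleton
    · rw [hDeqC t h]; exact (hC1 t ht).2.1
  have hDconn : ∀ t ∈ Icc (0:ℝ) T, IsPreconnected (D t) := by
    intro t ht
    by_cases h : t ∈ K
    · rw [hDeqK t h]; exact isPreconnected_singleton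
    · rw [hDeqC t h]; exact (hC1 t ht).2.2.1.isPreconnected
  have hDprox : ∀ t ∈ Icc (0:ℝ) T, UniformlyProxRegular ρ (D t) := by
    intro t ht
    by_cases h : t ∈ K
    · rw [hDeqK t h]
      intro a ha ζ _hζ b hb
      rw [mem_singleton_iff] at ha hb
      subst ha; subst hb
      simp
    · rw [hDeqC t h]; exact (hC1 t ht).2.2.2
  have hDsub : ∀ t ∈ Icc (0:ℝ) T, D t ⊆ closedBall (0:H) r := by
    intro t ht
    by_cases h : t ∈ K
    · rw [hDeqK t h, singleton_subset_iff]
      exact hbd t ht (hyC t h)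
    · rw [hDeqC t h]; exact hbd t ht
  have hDlsc : LscOn D (Icc (0:ℝ) T) := by
    intro a ha U hU hne'
    by_cases haK : a ∈ K
    · have hDa : D a = {y a} := hDeqK a haK
      have hyaU : y a ∈ U := by
        rw [hDa] at hne'
        obtain ⟨w, hw1, hw2⟩ := hne'
        rw [mem_singleton_iff] at hw1
        rwa [hw1] at hw2
      have h1 := hC2 a ha U hU ⟨y a, hyC a haK, hyaU⟩
      obtain ⟨O₁, hO₁o, haO₁, hO₁sub⟩ := mem_nhdsWithin.mp h1
      have h2 : y ⁻¹' U ∈ nhdsWithin a K := (hy a haK) (hU.mem_nhds hyaU)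
      obtain ⟨O₂, hO₂o, haO₂, hO₂sub⟩ := mem_nhdsWithin.mp h2
      apply mem_nhdsWithin.mpr
      refine ⟨O₁ ∩ O₂, hO₁o.inter hO₂o, ⟨haO₁, haO₂⟩, ?_⟩
      rintro a' ⟨⟨ha'1, ha'2⟩, ha'I⟩
      refine ⟨ha'I, ?_⟩
      by_cases ha'K : a' ∈ K
      · refine ⟨y a', ?_, hO₂sub ⟨ha'2, ha'K⟩⟩
        rw [hDeqK a' ha'K]
        exact rfl
      · have h3 := (hO₁sub ⟨ha'1, ha'I⟩).2
        obtain ⟨w, hw1, hw2⟩ := h3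
        exact ⟨w, by rw [hDeqC a' ha'K]; exact hw1, hw2⟩
    · have hKcl : IsClosed K := cK.isClosed
      have h1 := hC2 a ha U hU (by rw [← hDeqC a haK]; exact hne')
      obtain ⟨O₁, hO₁o, haO₁, hO₁sub⟩ := mem_nhdsWithin.mp h1
      apply mem_nhdsWithin.mpr
      refine ⟨O₁ ∩ Kᶜ, hO₁o.inter hKcl.isOpen_compl, ⟨haO₁, haK⟩, ?_⟩
      rintro a' ⟨⟨ha'1, ha'2⟩, ha'I⟩
      refine ⟨ha'I, ?_⟩
      obtain ⟨w, hw1, hw2⟩ := (hO₁sub ⟨ha'1, ha'I⟩).2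
      exact ⟨w, by rw [hDeqC a' ha'2]; exact hw1, hw2⟩
  obtain ⟨g, hgc, hgmem, hgnorm⟩ :=
    exists_selection ρ D T r hT hr.le hDne hDcl hDconn hDprox hDsub hDlsc
  refine ⟨g, hgc.continuousOn, ?_, ?_, fun t _ht => hgnorm t⟩
  · intro t ht
    by_cases h : t ∈ K
    · have hm := hgmem t ht
      rw [hDeqK t h, mem_singleton_iff] at hm
      rw [hm]
      exact hyC t h
    · have hm := hgmem t ht
      rwa [hDeqC t h] at hm
  · intro t ht
    have hm := hgmem t (hK ht)
    rw [hDeqK t ht, mem_singleton_iff] at hm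
    exact hm
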